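/- Let S be a semidomain that is not an integral domain (i.e., (S,+) is not a group). Then the polynomials x+1, x²+x+1, x³+1, and x⁴+x²+1 are irreducible in S[x]. -/

import Mathlib

open Polynomial

/-- A witness that the commutative semiring `S` embeds into an integral domain. -/
structure SemidomainWitness (S : Type) [CommSemiring S] : Type 1 where
  R : Type
  [commRing : CommRing R]
  [isDomain : IsDomain R]
  f : S →+* R
  inj : Function.Injective f

/-- A semidomain is a commutative semiring that embeds into an integral domain. -/
def IsSemidomain (S : Type) [CommSemiring S] : Prop :=
  Nonempty (SemidomainWitness S)

section Aux

set_option linter.unusedSectionVars false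

variable {S : Type} [CommSemiring S]

private lemma cm (p q : S[X]) (n : ℕ) :
    (p * q).coeff n = ∑ k ∈ Finset.range (n + 1), p.coeff k * q.coeff (n - k) := by
  rw [coeff_mul, Finset.Nat.sum_antidiagonal_eq_sum_range_succ_mk]

private lemma gz (p : S[X]) {m : ℕ} (h : p.natDegree = m) {k : ℕ} (hk : m < k) :
    p.coeff k = 0 :=
  coeff_eq_zero_of_natDegree_lt (h ▸ hk)

private lemma aux0 (g h : S[X]) (n : ℕ) (hg : g.natDegree = 0)
    (hgh : (g * h).coeff n = 1) : IsUnit g := by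
  rw [cm, Finset.sum_eq_single 0 (fun b _ hb0 => by
      rw [gz g hg (Nat.pos_of_ne_zero hb0), zero_mul])
    (fun h0 => absurd (Finset.mem_range.mpr (Nat.succ_pos n)) h0)] at hgh
  rw [eq_C_of_natDegree_eq_zero hg]
  exact isUnit_C.mpr ⟨⟨_, _, hgh, (mul_comm _ _).trans hgh⟩, rfl⟩

private lemma key_aux (key : ∀ b : S, 1 + b ≠ 0) (a b c d k : S) (h1 : a * c = 1)
    (h2 : b * c + a * d = 0) (h3 : b * k = 1) : False := by
  apply key ((a * d) * (a * k))
  have he : (1 : S) + a * d * (a * k) = (b * c + a * d) * (a * k) := by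
    calc (1 : S) + a * d * (a * k) = (a * c) * (b * k) + a * d * (a * k) := by
          rw [h1, h3, one_mul]
      _ = (b * c + a * d) * (a * k) := by ring
  rw [he, h2, zero_mul]

variable {R : Type} [CommRing R] [IsDomain R]

private lemma neg_aux (key : ∀ b : S, 1 + b ≠ 0) (f : S →+* R)
    (inj : Function.Injective f) (s : S) (hs : f s = -1) : False := by
  apply key s
  apply inj
  rw [map_add, map_one, hs, map_zero, add_neg_cancel]

private lemma cube_aux (key : ∀ b : S, 1 + b ≠ 0) (f : S →+* R)
    (inj : Function.Injective f) (u v : S) (h1 : u + v = 1) (h2 : u * v = 1) : False := by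
  have hU : f u + f v = 1 := by rw [← map_add, h1, map_one]
  have hV : f u * f v = 1 := by rw [← map_mul, h2, map_one]
  refine neg_aux key f inj (u ^ 3) ?_
  rw [map_pow]
  linear_combination (f u + 1) * f u * hU - (f u + 1) * hV

private lemma quad22 (key : ∀ b : S, 1 + b ≠ 0) (f : S →+* R)
    (inj : Function.Injective f) (a b c d e k : S)
    (E4 : a * d = 1) (E3 : b * d + a * e = 0)
    (E2 : c * d + b * e + a * k = 1) (E1 : c * e + b * k = 0)
    (E0 : c * k = 1) : False := by
  have F4 : f a * f d = 1 := by rw [← map_mul, E4, map_one]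
  have F3 : f b * f d + f a * f e = 0 := by
    rw [← map_mul, ← map_mul, ← map_add, E3, map_zero]
  have F2 : f c * f d + f b * f e + f a * f k = 1 := by
    simp only [← map_mul, ← map_add, E2, map_one]
  have F1 : f c * f e + f b * f k = 0 := by
    rw [← map_mul, ← map_mul, ← map_add, E1, map_zero]
  have F0 : f c * f k = 1 := by rw [← map_mul, E0, map_one]
  have hE : f e * ((f c) ^ 2 * (f d) ^ 2 - 1) = 0 := by
    linear_combination (f c * (f d) ^ 2) * F1 - f d * F3 + f e * F4 - f b * (f d) ^ 2 * F0
  rcases mul_eq_zero.mp hE with hE0 | hCD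
  · -- f e = 0, hence e = 0 and b = 0
    have he0 : e = 0 := inj (by rw [hE0, map_zero])
    have hK : f k ≠ 0 := fun hk => by
      rw [hk, mul_zero] at F0; exact one_ne_zero F0.symm
    have hb0 : f b * f k = 0 := by linear_combination F1 - f c * hE0
    have hfb : f b = 0 := (mul_eq_zero.mp hb0).resolve_right hK
    have hb : b = 0 := inj (by rw [hfb, map_zero])
    have E2' : c * d + a * k = 1 := by
      rw [hb, zero_mul, add_zero] at E2; exact E2
    refine cube_aux key f inj (a * k) (c * d) (by rw [add_comm]; exact E2') ?_
    calc a * k * (c * d) = (a * d) * (c * k) := by ring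
      _ = 1 := by rw [E4, E0, one_mul]
  · have hsq : (f c * f d - 1) * (f c * f d + 1) = 0 := by linear_combination hCD
    rcases mul_eq_zero.mp hsq with h1 | h2
    · have hcd : f c * f d = 1 := by linear_combination h1
      have hak : f a * f k = 1 := by
        linear_combination (f a * f d) * F0 + F4 - (f a * f k) * h1
      have hbe : f (b * e) = -1 := by
        rw [map_mul]; linear_combination F2 - hcd - hak
      exact neg_aux key f inj (b * e) hbe
    · have hcd : f (c * d) = -1 := by rw [map_mul]; linear_combination h2
      exact neg_aux key f inj (c * d) hcd

private lemma quadratic11 (key : ∀ b : S, 1 + b ≠ 0) (f : S →+* R)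
    (inj : Function.Injective f) (g h : S[X])
    (hgh : (X ^ 2 + X + 1 : S[X]) = g * h)
    (hg1 : g.natDegree = 1) (hh1 : h.natDegree = 1) : False := by
  have E : ∀ n : ℕ, (∑ k ∈ Finset.range (n + 1), g.coeff k * h.coeff (n - k)) =
      (X ^ 2 + X + 1 : S[X]).coeff n := fun n => by rw [← cm, hgh]
  have e2 := E 2
  have e1 := E 1
  have e0 := E 0
  simp [Finset.sum_range_succ, gz g hg1, gz h hh1, coeff_X_pow, coeff_one, coeff_X] at e2 e1 e0
  refine cube_aux key f inj (g.coeff 0 * h.coeff 1) (g.coeff 1 * h.coeff 0) e1 ?_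
  calc g.coeff 0 * h.coeff 1 * (g.coeff 1 * h.coeff 0)
      = (g.coeff 1 * h.coeff 1) * (g.coeff 0 * h.coeff 0) := by ring
    _ = 1 := by rw [e2, e0, one_mul]

private lemma cubic12 (key : ∀ b : S, 1 + b ≠ 0) (g h : S[X])
    (hgh : (X ^ 3 + 1 : S[X]) = g * h)
    (hg1 : g.natDegree = 1) (hh2 : h.natDegree = 2) : False := by
  have E : ∀ n : ℕ, (∑ k ∈ Finset.range (n + 1), g.coeff k * h.coeff (n - k)) =
      (X ^ 3 + 1 : S[X]).coeff n := fun n => by rw [← cm, hgh]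
  have e3 := E 3
  have e2 := E 2
  have e0 := E 0
  simp [Finset.sum_range_succ, gz g hg1, gz h hh2, coeff_X_pow, coeff_one, coeff_X] at e3 e2 e0
  exact key_aux key (g.coeff 1) (g.coeff 0) (h.coeff 2) (h.coeff 1) (h.coeff 0) e3 e2 e0

private lemma quartic13 (key : ∀ b : S, 1 + b ≠ 0) (g h : S[X])
    (hgh : (X ^ 4 + X ^ 2 + 1 : S[X]) = g * h)
    (hg1 : g.natDegree = 1) (hh3 : h.natDegree = 3) : False := by
  have E : ∀ n : ℕ, (∑ k ∈ Finset.range (n + 1), g.coeff k * h.coeff (n - k)) =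
      (X ^ 4 + X ^ 2 + 1 : S[X]).coeff n := fun n => by rw [← cm, hgh]
  have e4 := E 4
  have e3 := E 3
  have e0 := E 0
  simp [Finset.sum_range_succ, gz g hg1, gz h hh3, coeff_X_pow, coeff_one, coeff_X] at e4 e3 e0
  exact key_aux key (g.coeff 1) (g.coeff 0) (h.coeff 3) (h.coeff 2) (h.coeff 0) e4 e3 e0

private lemma quartic22 (key : ∀ b : S, 1 + b ≠ 0) (f : S →+* R)
    (inj : Function.Injective f) (g h : S[X])
    (hgh : (X ^ 4 + X ^ 2 + 1 : S[X]) = g * h)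
    (hg2 : g.natDegree = 2) (hh2 : h.natDegree = 2) : False := by
  have E : ∀ n : ℕ, (∑ k ∈ Finset.range (n + 1), g.coeff k * h.coeff (n - k)) =
      (X ^ 4 + X ^ 2 + 1 : S[X]).coeff n := fun n => by rw [← cm, hgh]
  have e4 := E 4
  have e3 := E 3
  have e2 := E 2
  have e1 := E 1
  have e0 := E 0
  simp [Finset.sum_range_succ, gz g hg2, gz h hh2, coeff_X_pow, coeff_one, coeff_X] at e4 e3 e2 e1 e0
  exact quad22 key f inj (g.coeff 2) (g.coeff 1) (g.coeff 0)
    (h.coeff 2) (h.coeff 1) (h.coeff 0) e4 e3 e2 e1 e0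

end Aux

/-- Let `S` be a semidomain that is not an integral domain, i.e. `(S,+)` is not a group. Then
the polynomials `x+1`, `x²+x+1`, `x³+1`, and `x⁴+x²+1` are irreducible in `S[x]`. -/
theorem stmt17 (S : Type) [CommSemiring S] (hS : IsSemidomain S)
    (hnd : ¬ ∀ a : S, ∃ b : S, a + b = 0) :
    Irreducible (X + 1 : Polynomial S) ∧
    Irreducible (X ^ 2 + X + 1 : Polynomial S) ∧
    Irreducible (X ^ 3 + 1 : Polynomial S) ∧
    Irreducible (X ^ 4 + X ^ 2 + 1 : Polynomial S) := by
  obtain ⟨⟨R, f, inj⟩⟩ := hS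
  have key : ∀ b : S, 1 + b ≠ 0 := by
    intro b hb
    apply hnd
    intro a
    exact ⟨a * b, by rw [show a + a * b = a * (1 + b) from by ring, hb, mul_zero]⟩
  haveI : Nontrivial S := ⟨1, 0, fun h => key 0 (by rw [add_zero]; exact h)⟩
  haveI : NoZeroDivisors S := ⟨fun {a b} hab => by
    rcases mul_eq_zero.mp (show f a * f b = 0 by rw [← map_mul, hab, map_zero]) with h | h
    · exact Or.inl (inj (by rw [h, map_zero]))
    · exact Or.inr (inj (by rw [h, map_zero]))⟩
  have d1 : (X + 1 : S[X]).natDegree = 1 := by compute_degree!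
  have d2 : (X ^ 2 + X + 1 : S[X]).natDegree = 2 := by compute_degree!
  have d3 : (X ^ 3 + 1 : S[X]).natDegree = 3 := by compute_degree!
  have d4 : (X ^ 4 + X ^ 2 + 1 : S[X]).natDegree = 4 := by compute_degree!
  have n1 : (X + 1 : S[X]) ≠ 0 := fun hh => by
    simpa [coeff_X_pow, coeff_one, coeff_X] using congrArg (fun q => q.coeff 1) hh
  have n2 : (X ^ 2 + X + 1 : S[X]) ≠ 0 := fun hh => by
    simpa [coeff_X_pow, coeff_one, coeff_X] using congrArg (fun q => q.coeff 2) hh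
  have n3 : (X ^ 3 + 1 : S[X]) ≠ 0 := fun hh => by
    simpa [coeff_X_pow, coeff_one, coeff_X] using congrArg (fun q => q.coeff 3) hh
  have n4 : (X ^ 4 + X ^ 2 + 1 : S[X]) ≠ 0 := fun hh => by
    simpa [coeff_X_pow, coeff_one, coeff_X] using congrArg (fun q => q.coeff 4) hh
  refine ⟨⟨?_, ?_⟩, ⟨?_, ?_⟩, ⟨?_, ?_⟩, ⟨?_, ?_⟩⟩
  · intro hu
    have h0 := natDegree_eq_zero_of_isUnit hu
    omega
  · intro g h hgh
    have hg0 : g ≠ 0 := by rintro rfl; rw [zero_mul] at hgh; exact n1 hgh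
    have hh0 : h ≠ 0 := by rintro rfl; rw [mul_zero] at hgh; exact n1 hgh
    have hd : g.natDegree + h.natDegree = 1 := by
      rw [← natDegree_mul hg0 hh0, ← hgh]; exact d1
    have hc : (g * h).coeff 1 = 1 := by rw [← hgh]; simp [coeff_one, coeff_X]
    rcases (show g.natDegree = 0 ∨ h.natDegree = 0 by omega) with h0 | h0
    · exact Or.inl (aux0 g h 1 h0 hc)
    · exact Or.inr (aux0 h g 1 h0 (by rw [mul_comm]; exact hc))
  · intro hu
    have h0 := natDegree_eq_zero_of_isUnit hu
    omega
  · intro g h hgh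
    have hg0 : g ≠ 0 := by rintro rfl; rw [zero_mul] at hgh; exact n2 hgh
    have hh0 : h ≠ 0 := by rintro rfl; rw [mul_zero] at hgh; exact n2 hgh
    have hd : g.natDegree + h.natDegree = 2 := by
      rw [← natDegree_mul hg0 hh0, ← hgh]; exact d2
    have hc : (g * h).coeff 2 = 1 := by rw [← hgh]; simp [coeff_X_pow, coeff_one, coeff_X]
    rcases (show g.natDegree = 0 ∨ h.natDegree = 0 ∨
        (g.natDegree = 1 ∧ h.natDegree = 1) by omega) with h0 | h0 | ⟨hg1, hh1⟩
    · exact Or.inl (aux0 g h 2 h0 hc)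
    · exact Or.inr (aux0 h g 2 h0 (by rw [mul_comm]; exact hc))
    · exact absurd (quadratic11 key f inj g h hgh hg1 hh1) not_false
  · intro hu
    have h0 := natDegree_eq_zero_of_isUnit hu
    omega
  · intro g h hgh
    have hg0 : g ≠ 0 := by rintro rfl; rw [zero_mul] at hgh; exact n3 hgh
    have hh0 : h ≠ 0 := by rintro rfl; rw [mul_zero] at hgh; exact n3 hgh
    have hd : g.natDegree + h.natDegree = 3 := by
      rw [← natDegree_mul hg0 hh0, ← hgh]; exact d3
    have hc : (g * h).coeff 3 = 1 := by rw [← hgh]; simp [coeff_X_pow, coeff_one, coeff_X]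
    rcases (show g.natDegree = 0 ∨ h.natDegree = 0 ∨
        (g.natDegree = 1 ∧ h.natDegree = 2) ∨
        (g.natDegree = 2 ∧ h.natDegree = 1) by omega) with h0 | h0 | ⟨hg1, hh2⟩ | ⟨hg2, hh1⟩
    · exact Or.inl (aux0 g h 3 h0 hc)
    · exact Or.inr (aux0 h g 3 h0 (by rw [mul_comm]; exact hc))
    · exact absurd (cubic12 key g h hgh hg1 hh2) not_false
    · exact absurd (cubic12 key h g (by rw [hgh, mul_comm]) hh1 hg2) not_false
  · intro hu
    have h0 := natDegree_eq_zero_of_isUnit hu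
    omega
  · intro g h hgh
    have hg0 : g ≠ 0 := by rintro rfl; rw [zero_mul] at hgh; exact n4 hgh
    have hh0 : h ≠ 0 := by rintro rfl; rw [mul_zero] at hgh; exact n4 hgh
    have hd : g.natDegree + h.natDegree = 4 := by
      rw [← natDegree_mul hg0 hh0, ← hgh]; exact d4
    have hc : (g * h).coeff 4 = 1 := by rw [← hgh]; simp [coeff_X_pow, coeff_one, coeff_X]
    rcases (show g.natDegree = 0 ∨ h.natDegree = 0 ∨
        (g.natDegree = 1 ∧ h.natDegree = 3) ∨
        (g.natDegree = 3 ∧ h.natDegree = 1) ∨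
        (g.natDegree = 2 ∧ h.natDegree = 2) by omega) with
      h0 | h0 | ⟨hg1, hh3⟩ | ⟨hg3, hh1⟩ | ⟨hg2, hh2⟩
    · exact Or.inl (aux0 g h 4 h0 hc)
    · exact Or.inr (aux0 h g 4 h0 (by rw [mul_comm]; exact hc))
    · exact absurd (quartic13 key g h hgh hg1 hh3) not_false
    · exact absurd (quartic13 key h g (by rw [hgh, mul_comm]) hh1 hg3) not_false
    · exact absurd (quartic22 key f inj g h hgh hg2 hh2) not_false
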